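/- The only orientation-preserving homeomorphisms of the circle that commute with a given irrational rotation R_α are themselves rotations. -/
import Mathlib

open Filter Topology Set

noncomputable section

abbrev S1 : Type := AddCircle (1 : ℝ)

/-- `F : ℝ → ℝ` is a lift of the orientation-preserving circle map `f`. -/
def IsLiftOf (F : ℝ → ℝ) (f : S1 → S1) : Prop :=
  StrictMono F ∧ Continuous F ∧ (∀ x, F (x + 1) = F x + 1) ∧
    ∀ x : ℝ, ((F x : ℝ) : S1) = f (x : S1)

/-- `τ` is the translation number of the lift `F`. -/
def HasTransNum (F : ℝ → ℝ) (τ : ℝ) : Prop :=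
  Tendsto (fun n : ℕ => F^[n] 0 / (n : ℝ)) atTop (𝓝 τ)

/-- `r` is the rotation number of the circle map `f`. -/
def HasRotNum (f : S1 → S1) (r : S1) : Prop :=
  ∃ F τ, IsLiftOf F f ∧ HasTransNum F τ ∧ ((τ : ℝ) : S1) = r

/-- Any orientation-preserving circle homeomorphism commuting with an irrational
rotation is itself a rotation. -/
theorem commute_irrational_rotation (α : ℝ) (hα : Irrational α)
    (f : S1 → S1) (hf : ∃ F, IsLiftOf F f)
    (hcomm : ∀ x : S1, f (x + ((α : ℝ) : S1)) = f x + ((α : ℝ) : S1)) :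
    ∃ β : S1, ∀ x, f x = x + β := by
  obtain ⟨F, hFmono, hFcont, hFper, hFlift⟩ := hf
  -- f is continuous
  have hmk : Continuous (fun x : ℝ => (x : S1)) := continuous_quotient_mk'
  have hfc : Continuous f := by
    rw [(QuotientAddGroup.isQuotientMap_mk (AddSubgroup.zmultiples (1:ℝ))).continuous_iff]
    have : (f ∘ QuotientAddGroup.mk) = fun x : ℝ => ((F x : ℝ) : S1) :=
      funext fun x => (hFlift x).symm
    rw [this]
    exact hmk.comp hFcont
  -- the subgroup of "good" translations
  let C : AddSubgroup S1 :=
    { carrier := {y : S1 | ∀ x, f (x + y) = f x + y}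
      zero_mem' := by intro x; simp
      add_mem' := by
        intro y z hy hz x
        rw [← add_assoc, hz (x + y), hy x, add_assoc]
      neg_mem' := by
        intro y hy x
        have h := hy (x + -y)
        have h2 : x + -y + y = x := by abel
        rw [h2] at h
        rw [eq_add_neg_iff_add_eq]
        exact h.symm }
  have hCclosed : IsClosed (C : Set S1) := by
    have : (C : Set S1) = ⋂ x : S1, {y : S1 | f (x + y) = f x + y} := by
      ext y; simp [C, Set.mem_iInter]
    rw [this]
    exact isClosed_iInter fun x =>
      isClosed_eq (hfc.comp (continuous_const.add continuous_id))
        (continuous_const.add continuous_id)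
  -- the real subgroup generated by 1 and α is dense
  have hSdense : Dense ((AddSubgroup.closure ({1, α} : Set ℝ) : AddSubgroup ℝ) : Set ℝ) := by
    rcases AddSubgroup.dense_or_cyclic (AddSubgroup.closure ({1, α} : Set ℝ)) with h | ⟨a, ha⟩
    · exact h
    · exfalso
      have h1 : (1 : ℝ) ∈ AddSubgroup.closure ({1, α} : Set ℝ) :=
        AddSubgroup.subset_closure (by simp)
      have h2 : α ∈ AddSubgroup.closure ({1, α} : Set ℝ) :=
        AddSubgroup.subset_closure (by simp)
      rw [ha, AddSubgroup.mem_closure_singleton] at h1 h2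
      obtain ⟨m, hm⟩ := h1
      obtain ⟨n, hn⟩ := h2
      have hm0 : (m : ℝ) ≠ 0 := by
        intro h
        rw [zsmul_eq_mul, h, zero_mul] at hm
        exact one_ne_zero hm.symm
      rw [zsmul_eq_mul] at hm hn
      have : α = ((n : ℚ) / (m : ℚ) : ℚ) := by
        push_cast
        rw [eq_div_iff hm0]
        linear_combination (n : ℝ) * hm - (m : ℝ) * hn
      exact (Rat.not_irrational _) (this ▸ hα)
  -- push density to the circle
  have hmap : (AddSubgroup.closure ({1, α} : Set ℝ)).map
      (QuotientAddGroup.mk' (AddSubgroup.zmultiples (1 : ℝ)))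
      = AddSubgroup.closure ({((1 : ℝ) : S1), ((α : ℝ) : S1)} : Set S1) := by
    rw [AddMonoidHom.map_closure]
    congr 1
    simp [Set.image_insert_eq]
  have hgen : AddSubgroup.closure ({((1 : ℝ) : S1), ((α : ℝ) : S1)} : Set S1) ≤ C := by
    rw [AddSubgroup.closure_le]
    rintro y (rfl | rfl)
    · have : ((1 : ℝ) : S1) = 0 := AddCircle.coe_period 1
      rw [this]; intro x; simp
    · exact fun x => hcomm x
  have hCdense : Dense (C : Set S1) := by
    have himg : Dense ((fun x : ℝ => (x : S1)) ''
        ((AddSubgroup.closure ({1, α} : Set ℝ) : AddSubgroup ℝ) : Set ℝ)) := by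
      have hsurj : Function.Surjective (fun x : ℝ => (x : S1)) :=
        Quotient.exists_rep
      exact (hsurj.denseRange).dense_image hmk hSdense
    have hsub : ((fun x : ℝ => (x : S1)) ''
        ((AddSubgroup.closure ({1, α} : Set ℝ) : AddSubgroup ℝ) : Set ℝ)) ⊆ (C : Set S1) := by
      rintro _ ⟨r, hr, rfl⟩
      have : (r : S1) ∈ (AddSubgroup.closure ({1, α} : Set ℝ)).map
          (QuotientAddGroup.mk' (AddSubgroup.zmultiples (1 : ℝ))) :=
        ⟨r, hr, rfl⟩
      rw [hmap] at this
      exact hgen this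
    exact himg.mono hsub
  have hCuniv : (C : Set S1) = Set.univ := by
    rw [← hCclosed.closure_eq, hCdense.closure_eq]
  refine ⟨f 0, fun x => ?_⟩
  have hx : x ∈ (C : Set S1) := hCuniv ▸ Set.mem_univ x
  have := hx 0
  rw [zero_add] at this
  rw [this, add_comm]
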